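/- arXiv:1501.03261 — 2 statements merged into one kernel-verified Lean document; each statement's English description precedes it below -/
import Mathlib

section
/- Ahlfors–Schwarz lemma: Let g be a hermitian pseudo-metric on the unit disc Δ, written g = λ(z)|dz|², with λ upper semicontinuous, such that wherever λ > 0 its Gaussian curvature satisfies −(1/λ)Δ log λ ≤ −c for some constant c > 0 (curvature ≤ −c). Then λ(z) ≤ (2/c) · (1/(1−|z|²))², i.e. g ≤ (2/c)·g_P where g_P is the Poincaré metric of curvature −2 on Δ. -/
open Filter Set Metric Topology

/-! ### Auxiliary lemmas -/

private lemma hasDerivAt_line (z v : ℂ) (t : ℝ) :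
    HasDerivAt (fun t : ℝ => z + t • v) v t := by
  simpa using ((hasDerivAt_id t).smul_const v).const_add z

private lemma line_contDiffAt (u : ℂ → ℝ) (z v : ℂ) (hu : ContDiffAt ℝ 2 u z) :
    ContDiffAt ℝ 2 (fun t : ℝ => u (z + t • v)) 0 := by
  have hL : ContDiff ℝ 2 (fun t : ℝ => z + t • v) :=
    contDiff_const.add (contDiff_id.smul contDiff_const)
  exact ContDiffAt.comp (0 : ℝ) (by simpa using hu) hL.contDiffAt

/-- The second derivative along a line equals the iterated fderiv applied to `(v,v)`. -/
private lemma iteratedFDeriv_line (u : ℂ → ℝ) (z v : ℂ) (hu : ContDiffAt ℝ 2 u z) :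
    iteratedFDeriv ℝ 2 u z ![v, v] =
      deriv (deriv (fun t : ℝ => u (z + t • v))) 0 := by
  set L : ℝ → ℂ := fun t => z + t • v with hLdef
  have hL0 : L 0 = z := by simp [hLdef]
  have hev : ∀ᶠ w in 𝓝 z, ContDiffAt ℝ 2 u w := hu.eventually (by norm_num)
  have hLcont : ContinuousAt L 0 := (hasDerivAt_line z v 0).continuousAt
  have hevt : ∀ᶠ t in 𝓝 (0 : ℝ), ContDiffAt ℝ 2 u (L t) := by
    have : Tendsto L (𝓝 0) (𝓝 z) := by rw [← hL0]; exact hLcont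
    exact this.eventually hev
  have hderiv1 : ∀ᶠ t in 𝓝 (0 : ℝ),
      deriv (fun s : ℝ => u (L s)) t = fderiv ℝ u (L t) v := by
    filter_upwards [hevt] with t ht
    have hdu : DifferentiableAt ℝ u (L t) := ht.differentiableAt (by norm_num)
    exact (hdu.hasFDerivAt.comp_hasDerivAt t (hasDerivAt_line z v t)).deriv
  have h2 : deriv (deriv (fun s : ℝ => u (L s))) 0
      = deriv (fun t : ℝ => fderiv ℝ u (L t) v) 0 := by
    apply Filter.EventuallyEq.deriv_eq
    filter_upwards [hderiv1] with t ht using ht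
  have hf1 : ContDiffAt ℝ 1 (fderiv ℝ u) z := hu.fderiv_right le_rfl
  have hdf : DifferentiableAt ℝ (fderiv ℝ u) z := hf1.differentiableAt (by norm_num)
  have hdf' : DifferentiableAt ℝ (fderiv ℝ u) (L 0) := by rwa [hL0]
  have h3 : HasDerivAt (fun t : ℝ => fderiv ℝ u (L t))
      (fderiv ℝ (fderiv ℝ u) z v) 0 := by
    have := hdf'.hasFDerivAt.comp_hasDerivAt (0 : ℝ) (hasDerivAt_line z v 0)
    rwa [hL0] at this
  have h4 : HasDerivAt (fun t : ℝ => fderiv ℝ u (L t) v)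
      ((fderiv ℝ (fderiv ℝ u) z v) v) 0 := by
    simpa using h3.clm_apply (hasDerivAt_const (0 : ℝ) v)
  rw [iteratedFDeriv_two_apply]
  simp only [Matrix.cons_val_zero, Matrix.cons_val_one, Matrix.head_cons]
  rw [h2, h4.deriv]

private lemma contDiffAt_deriv_of (g : ℝ → ℝ) (x : ℝ) (hg : ContDiffAt ℝ 2 g x) :
    ContDiffAt ℝ 1 (deriv g) x := by
  have h1 : ContDiffAt ℝ 1 (fderiv ℝ g) x := hg.fderiv_right le_rfl
  have h2 : ContDiffAt ℝ 1 (fun y => fderiv ℝ g y (1 : ℝ)) x :=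
    h1.clm_apply contDiffAt_const
  have : (fun y => fderiv ℝ g y (1 : ℝ)) = deriv g := by
    funext y; exact fderiv_apply_one_eq_deriv
  rwa [this] at h2

/-- Second derivative test: at an interior local maximum the second derivative is `≤ 0`. -/
private lemma second_deriv_nonpos_of_isLocalMax (g : ℝ → ℝ)
    (hg : ContDiffAt ℝ 2 g 0) (hmax : IsLocalMax g 0) :
    deriv (deriv g) 0 ≤ 0 := by
  by_contra hpos
  push_neg at hpos
  have hd1 : ContDiffAt ℝ 1 (deriv g) 0 := contDiffAt_deriv_of g 0 hg
  have hdd : DifferentiableAt ℝ (deriv g) 0 := hd1.differentiableAt (by norm_num)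
  have h0 : deriv g 0 = 0 := hmax.deriv_eq_zero
  have hD : HasDerivAt (deriv g) (deriv (deriv g) 0) 0 := hdd.hasDerivAt
  have hslope : ∀ᶠ t in 𝓝[≠] (0 : ℝ), 0 < slope (deriv g) 0 t :=
    (hasDerivAt_iff_tendsto_slope.mp hD).eventually_const_lt hpos
  have hslope' : ∀ᶠ t in 𝓝[>] (0 : ℝ), 0 < deriv g t := by
    have hsub : 𝓝[>] (0 : ℝ) ≤ 𝓝[≠] (0 : ℝ) :=
      nhdsWithin_mono 0 (fun t ht => ne_of_gt ht)
    filter_upwards [hslope.filter_mono hsub, self_mem_nhdsWithin] with t ht ht'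
    have : slope (deriv g) 0 t = deriv g t / t := by
      simp [slope_def_field, h0]
    rw [this] at ht
    have htpos : (0 : ℝ) < t := ht'
    have h2 := mul_pos ht htpos
    rwa [div_mul_cancel₀ _ (ne_of_gt htpos)] at h2
  have hev2 : ∀ᶠ t in 𝓝 (0 : ℝ), ContDiffAt ℝ 2 g t := hg.eventually (by norm_num)
  have hcomb : ∀ᶠ t in 𝓝[>] (0 : ℝ),
      (ContDiffAt ℝ 2 g t ∧ g t ≤ g 0) ∧ 0 < deriv g t :=
    (((hev2.and hmax).filter_mono nhdsWithin_le_nhds).and hslope')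
  rcases mem_nhdsGT_iff_exists_Ioc_subset.mp hcomb with ⟨δ, hδ, hsub⟩
  have hδ0 : (0 : ℝ) < δ := hδ
  have hcont : ContinuousOn g (Icc 0 δ) := by
    intro t ht
    rcases eq_or_lt_of_le ht.1 with h | h
    · subst h
      exact hg.continuousAt.continuousWithinAt
    · exact ((hsub ⟨h, ht.2⟩).1.1.continuousAt).continuousWithinAt
  have hderivpos : ∀ t ∈ Ioo (0:ℝ) δ, 0 < deriv g t := fun t ht =>
    (hsub ⟨ht.1, le_of_lt ht.2⟩).2
  have hmono : StrictMonoOn g (Icc 0 δ) := by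
    apply strictMonoOn_of_deriv_pos (convex_Icc 0 δ) hcont
    intro t ht
    rw [interior_Icc] at ht
    exact hderivpos t ht
  have hlt : g 0 < g δ := hmono ⟨le_rfl, le_of_lt hδ0⟩ ⟨le_of_lt hδ0, le_rfl⟩ hδ0
  have hle : g δ ≤ g 0 := (hsub ⟨hδ0, le_rfl⟩).1.2
  linarith

/-- Second derivative along a line of `log (b - (s+t)^2)` at `t = 0`. -/
private lemma log_line_deriv2 (b s : ℝ) (h : s ^ 2 < b) :
    deriv (deriv (fun t : ℝ => Real.log (b - (s + t) ^ 2))) 0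
      = (-2 * b - 2 * s ^ 2) / (b - s ^ 2) ^ 2 := by
  set Q : ℝ → ℝ := fun t => b - (s + t) ^ 2 with hQdef
  have hQ' : ∀ t : ℝ, HasDerivAt Q (-(2 * (s + t))) t := by
    intro t
    have h1 : HasDerivAt (fun t : ℝ => s + t) 1 t := (hasDerivAt_id t).const_add s
    have h2 : HasDerivAt (fun t : ℝ => (s + t) ^ 2) (2 * (s + t) ^ 1 * 1) t := h1.pow 2
    have h3 := h2.const_sub b
    simpa using h3.congr_deriv (by ring)
  have hQ0 : Q 0 = b - s ^ 2 := by simp [hQdef]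
  have hQcont : ContinuousAt Q 0 := (hQ' 0).continuousAt
  have hQpos : ∀ᶠ t in 𝓝 (0 : ℝ), 0 < Q t := by
    apply hQcont.eventually_const_lt
    rw [hQ0]; linarith
  have hderiv1 : ∀ᶠ t in 𝓝 (0 : ℝ),
      deriv (fun t : ℝ => Real.log (Q t)) t = -(2 * (s + t)) / Q t := by
    filter_upwards [hQpos] with t ht
    exact ((hQ' t).log (ne_of_gt ht)).deriv
  have h2 : deriv (deriv (fun t : ℝ => Real.log (Q t))) 0
      = deriv (fun t : ℝ => -(2 * (s + t)) / Q t) 0 :=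
    Filter.EventuallyEq.deriv_eq (by filter_upwards [hderiv1] with t ht using ht)
  have hN : HasDerivAt (fun t : ℝ => -(2 * (s + t))) (-2) 0 := by
    have h1 : HasDerivAt (fun t : ℝ => s + t) 1 0 := (hasDerivAt_id 0).const_add s
    simpa using (h1.const_mul 2).fun_neg
  have hdiv : HasDerivAt (fun t : ℝ => -(2 * (s + t)) / Q t)
      ((-2 * Q 0 - -(2 * (s + 0)) * (-(2 * (s + 0)))) / Q 0 ^ 2) 0 := by
    have := hN.fun_div (hQ' 0) (by rw [hQ0]; nlinarith)
    convert this using 1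
  rw [h2, hdiv.deriv, hQ0]
  have hne : b - s ^ 2 ≠ 0 := by nlinarith
  field_simp
  ring

/-! ### The statement's definitions -/

/-- The complex Laplacian `∂²/∂z∂z̄ = (1/4)(∂²/∂x² + ∂²/∂y²)` of a real-valued function
on `ℂ`; with this normalization `i∂∂̄ u` is identified with `lapZZbar u` times `i dz∧dz̄/2`. -/
noncomputable def lapZZbar (u : ℂ → ℝ) (z : ℂ) : ℝ :=
  (1 / 4) * ((iteratedFDeriv ℝ 2 u z) ![1, 1] +
    (iteratedFDeriv ℝ 2 u z) ![Complex.I, Complex.I])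

/-! ### Properties of `lapZZbar` -/

private lemma lapZZbar_eq_line (u : ℂ → ℝ) (z : ℂ) (hu : ContDiffAt ℝ 2 u z) :
    lapZZbar u z = (1 / 4) * (deriv (deriv (fun t : ℝ => u (z + t • (1:ℂ)))) 0
      + deriv (deriv (fun t : ℝ => u (z + t • Complex.I))) 0) := by
  rw [lapZZbar, iteratedFDeriv_line u z 1 hu, iteratedFDeriv_line u z Complex.I hu]

private lemma lapZZbar_nonpos_of_isLocalMax (u : ℂ → ℝ) (z : ℂ)
    (hu : ContDiffAt ℝ 2 u z) (hmax : IsLocalMax u z) :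
    lapZZbar u z ≤ 0 := by
  have key : ∀ v : ℂ, deriv (deriv (fun t : ℝ => u (z + t • v))) 0 ≤ 0 := by
    intro v
    apply second_deriv_nonpos_of_isLocalMax _ (line_contDiffAt u z v hu)
    have hLcont : ContinuousAt (fun t : ℝ => z + t • v) 0 :=
      (hasDerivAt_line z v 0).continuousAt
    have h0 : z + (0:ℝ) • v = z := by simp
    have hT : Tendsto (fun t : ℝ => z + t • v) (𝓝 0) (𝓝 z) := by
      have := hLcont.tendsto; rwa [h0] at this
    have hev : ∀ᶠ t in 𝓝 (0:ℝ), u (z + t • v) ≤ u z := hT.eventually hmax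
    have hz : u (z + (0:ℝ) • v) = u z := by rw [h0]
    unfold IsLocalMax IsMaxFilter
    filter_upwards [hev] with t ht
    rw [hz]; exact ht
  rw [lapZZbar_eq_line u z hu]
  have h1 := key 1
  have h2 := key Complex.I
  linarith

private lemma deriv2_add (F G : ℝ → ℝ) (hF : ContDiffAt ℝ 2 F 0) (hG : ContDiffAt ℝ 2 G 0) :
    deriv (deriv (fun t => F t + G t)) 0 = deriv (deriv F) 0 + deriv (deriv G) 0 := by
  have hevF : ∀ᶠ t in 𝓝 (0:ℝ), ContDiffAt ℝ 2 F t := hF.eventually (by norm_num)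
  have hevG : ∀ᶠ t in 𝓝 (0:ℝ), ContDiffAt ℝ 2 G t := hG.eventually (by norm_num)
  have h1 : deriv (fun t => F t + G t) =ᶠ[𝓝 (0:ℝ)] fun t => deriv F t + deriv G t := by
    filter_upwards [hevF, hevG] with t htF htG
    exact deriv_fun_add (htF.differentiableAt (by norm_num)) (htG.differentiableAt (by norm_num))
  rw [Filter.EventuallyEq.deriv_eq h1]
  exact deriv_fun_add ((contDiffAt_deriv_of F 0 hF).differentiableAt (by norm_num))
    ((contDiffAt_deriv_of G 0 hG).differentiableAt (by norm_num))

private lemma lapZZbar_add (f g : ℂ → ℝ) (z : ℂ)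
    (hf : ContDiffAt ℝ 2 f z) (hg : ContDiffAt ℝ 2 g z) :
    lapZZbar (fun w => f w + g w) z = lapZZbar f z + lapZZbar g z := by
  rw [lapZZbar_eq_line _ z (hf.add hg), lapZZbar_eq_line f z hf, lapZZbar_eq_line g z hg,
    deriv2_add _ _ (line_contDiffAt f z 1 hf) (line_contDiffAt g z 1 hg),
    deriv2_add _ _ (line_contDiffAt f z Complex.I hf) (line_contDiffAt g z Complex.I hg)]
  ring

private lemma lapZZbar_const_mul (f : ℂ → ℝ) (a : ℝ) (z : ℂ) (hf : ContDiffAt ℝ 2 f z) :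
    lapZZbar (fun w => a * f w) z = a * lapZZbar f z := by
  have hc : ContDiffAt ℝ 2 (fun w => a * f w) z := contDiffAt_const.mul hf
  rw [lapZZbar_eq_line _ z hc, lapZZbar_eq_line f z hf]
  have key : ∀ v : ℂ, deriv (deriv (fun t : ℝ => a * f (z + t • v))) 0
      = a * deriv (deriv (fun t : ℝ => f (z + t • v))) 0 := by
    intro v
    have h1 : deriv (fun t : ℝ => a * f (z + t • v))
        = fun t => a * deriv (fun s : ℝ => f (z + s • v)) t := deriv_const_mul_field' a
    rw [h1, deriv_const_mul_field a]
  rw [key 1, key Complex.I]; ring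

/-! ### The comparison metric -/

private lemma contDiffAt_normSq (z : ℂ) :
    ContDiffAt ℝ 2 (fun w : ℂ => Complex.normSq w) z := by
  have : (fun w : ℂ => Complex.normSq w) = fun w : ℂ => w.re * w.re + w.im * w.im := by
    funext w; exact Complex.normSq_apply w
  rw [this]
  exact ((Complex.reCLM.contDiff.mul Complex.reCLM.contDiff).add
    (Complex.imCLM.contDiff.mul Complex.imCLM.contDiff)).contDiffAt

private lemma phi_contDiffAt (r : ℝ) (z : ℂ) (h : Complex.normSq z < r ^ 2) :
    ContDiffAt ℝ 2 (fun w => Real.log (r ^ 2 - Complex.normSq w)) z := by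
  apply ContDiffAt.log
  · exact contDiffAt_const.sub (contDiffAt_normSq z)
  · have : 0 < r ^ 2 - Complex.normSq z := by linarith
    exact ne_of_gt this

private lemma lapZZbar_phi (r : ℝ) (z : ℂ) (h : Complex.normSq z < r ^ 2) :
    lapZZbar (fun w => Real.log (r ^ 2 - Complex.normSq w)) z
      = -(r ^ 2) / (r ^ 2 - Complex.normSq z) ^ 2 := by
  have hC := phi_contDiffAt r z h
  have hnsq : Complex.normSq z = z.re ^ 2 + z.im ^ 2 := by
    rw [Complex.normSq_apply]; ring
  rw [lapZZbar, iteratedFDeriv_line _ z 1 hC, iteratedFDeriv_line _ z Complex.I hC]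
  have e1 : (fun t : ℝ => Real.log (r ^ 2 - Complex.normSq (z + t • (1:ℂ))))
      = fun t : ℝ => Real.log ((r ^ 2 - z.im ^ 2) - (z.re + t) ^ 2) := by
    funext t
    congr 1
    rw [Complex.normSq_apply]
    simp [Complex.add_re, Complex.add_im]
    ring
  have e2 : (fun t : ℝ => Real.log (r ^ 2 - Complex.normSq (z + t • Complex.I)))
      = fun t : ℝ => Real.log ((r ^ 2 - z.re ^ 2) - (z.im + t) ^ 2) := by
    funext t
    congr 1
    rw [Complex.normSq_apply]
    simp [Complex.add_re, Complex.add_im]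
    ring
  rw [e1, e2, log_line_deriv2 _ _ (by nlinarith), log_line_deriv2 _ _ (by nlinarith)]
  have hb1 : r ^ 2 - z.im ^ 2 - z.re ^ 2 = r ^ 2 - Complex.normSq z := by rw [hnsq]; ring
  have hb2 : r ^ 2 - z.re ^ 2 - z.im ^ 2 = r ^ 2 - Complex.normSq z := by rw [hnsq]; ring
  rw [hb1, hb2]
  have hne : r ^ 2 - Complex.normSq z ≠ 0 := by linarith
  field_simp
  ring

/-! ### Upper semicontinuity tools -/

private lemma usc_exists_max {K : Set ℂ} (hK : IsCompact K) (hne : K.Nonempty)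
    {f : ℂ → ℝ} (hf : UpperSemicontinuousOn f K) :
    ∃ x ∈ K, ∀ y ∈ K, f y ≤ f x := by
  by_contra hcon
  push_neg at hcon
  choose Y hY1 hY2 using hcon
  have hV : ∀ x (hx : x ∈ K), ∃ V : Set ℂ, IsOpen V ∧ x ∈ V ∧
      ∀ w ∈ V ∩ K, f w < f (Y x hx) := by
    intro x hx
    have := hf x hx (f (Y x hx)) (hY2 x hx)
    rcases mem_nhdsWithin.mp this with ⟨V, hVo, hxV, hVsub⟩
    exact ⟨V, hVo, hxV, fun w hw => hVsub hw⟩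
  choose V hVo hxV hVlt using hV
  rcases hK.elim_nhds_subcover' V (fun x hx => (hVo x hx).mem_nhds (hxV x hx)) with ⟨t, ht⟩
  have htne : t.Nonempty := by
    rcases hne with ⟨x₀, hx₀⟩
    rcases Set.mem_iUnion₂.mp (ht hx₀) with ⟨a, ha, _⟩
    exact ⟨a, ha⟩
  rcases t.exists_max_image (fun a => f (Y a.1 a.2)) htne with ⟨b, hb, hbmax⟩
  have hYb : Y b.1 b.2 ∈ K := hY1 b.1 b.2
  rcases Set.mem_iUnion₂.mp (ht hYb) with ⟨a, ha, hmem⟩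
  have h1 : f (Y b.1 b.2) < f (Y a.1 a.2) := hVlt a.1 a.2 _ ⟨hmem, hYb⟩
  have h2 : f (Y a.1 a.2) ≤ f (Y b.1 b.2) := hbmax a ha
  linarith

private lemma usc_mul_cont {K : Set ℂ} {f g : ℂ → ℝ}
    (hf : UpperSemicontinuousOn f K) (hfnn : ∀ x ∈ K, 0 ≤ f x)
    (hg : ContinuousOn g K) (hgnn : ∀ x, 0 ≤ g x) :
    UpperSemicontinuousOn (fun x => f x * g x) K := by
  intro x hx y hy
  have hxy : f x * g x < y := hy
  have hten : Tendsto (fun δ : ℝ => (f x + δ) * (g x + δ)) (𝓝[>] 0)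
      (𝓝 ((f x + 0) * (g x + 0))) := by
    apply Tendsto.mono_left _ nhdsWithin_le_nhds
    exact ((continuous_const.add continuous_id).mul
      (continuous_const.add continuous_id)).continuousAt
  have hev : ∀ᶠ δ in 𝓝[>] (0:ℝ), (f x + δ) * (g x + δ) < y :=
    hten.eventually_lt_const (by simpa using hxy)
  rcases (hev.and self_mem_nhdsWithin).exists with ⟨δ, hδy, hδpos⟩
  have hδ0 : (0:ℝ) < δ := hδpos
  have ev1 : ∀ᶠ w in 𝓝[K] x, f w < f x + δ := hf x hx (f x + δ) (by linarith)
  have ev2 : ∀ᶠ w in 𝓝[K] x, g w < g x + δ :=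
    (hg x hx).eventually_lt_const (by linarith)
  filter_upwards [ev1, ev2, self_mem_nhdsWithin] with w h1 h2 hwK
  have hfw : 0 ≤ f w := hfnn w hwK
  calc f w * g w ≤ f w * (g x + δ) := mul_le_mul_of_nonneg_left (le_of_lt h2) hfw
    _ < (f x + δ) * (g x + δ) := by
        apply mul_lt_mul_of_pos_right h1
        have := hgnn x; linarith
    _ < y := hδy

/-! ### Main theorem -/

/-- **Ahlfors–Schwarz lemma.** Let `g = λ(z)|dz|²` be a hermitian
pseudo-metric on the unit disc, `λ` upper semicontinuous (and smooth where positive), whose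
Gaussian curvature is `≤ −c` wherever `λ > 0` (i.e. `∂∂̄ log λ ≥ c·λ` there), for some
`c > 0`. Then `λ(z) ≤ (2/c)·(1/(1−|z|²))²`, i.e. `g ≤ (2/c)·g_P`. -/
theorem ahlfors_schwarz
    (lam : ℂ → ℝ) (c : ℝ) (hc : 0 < c)
    (hnn : ∀ z ∈ Metric.ball (0 : ℂ) 1, 0 ≤ lam z)
    (husc : UpperSemicontinuousOn lam (Metric.ball (0 : ℂ) 1))
    (hsmooth : ∀ z ∈ Metric.ball (0 : ℂ) 1, 0 < lam z → ContDiffAt ℝ 2 lam z)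
    (hcurv : ∀ z ∈ Metric.ball (0 : ℂ) 1, 0 < lam z →
      c * lam z ≤ lapZZbar (fun w => Real.log (lam w)) z) :
    ∀ z ∈ Metric.ball (0 : ℂ) 1,
      lam z ≤ (2 / c) * (1 / (1 - ‖z‖ ^ 2)) ^ 2 := by
  intro z hz
  have hz1 : ‖z‖ < 1 := by
    rwa [mem_ball_zero_iff] at hz
  have hnz : Complex.normSq z < 1 := by
    rw [← Complex.sq_norm]; nlinarith [norm_nonneg z]
  -- Main claim: bound for each intermediate radius r
  have claim : ∀ r : ℝ, ‖z‖ < r → r < 1 →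
      lam z ≤ (2 * r ^ 2 / c) / (r ^ 2 - Complex.normSq z) ^ 2 := by
    intro r hzr hr1
    have hr0 : 0 < r := lt_of_le_of_lt (norm_nonneg z) hzr
    set K : Set ℂ := Metric.closedBall (0 : ℂ) r with hKdef
    have hKcomp : IsCompact K := isCompact_closedBall 0 r
    have hKsub : K ⊆ Metric.ball (0 : ℂ) 1 := closedBall_subset_ball hr1
    set F : ℂ → ℝ := fun w => lam w * (r ^ 2 - Complex.normSq w) ^ 2 with hFdef
    have hgcont : Continuous (fun w : ℂ => (r ^ 2 - Complex.normSq w) ^ 2) :=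
      (continuous_const.sub Complex.continuous_normSq).pow 2
    have huscF : UpperSemicontinuousOn F K := by
      apply usc_mul_cont (husc.mono hKsub) (fun x hx => hnn x (hKsub hx))
        hgcont.continuousOn (fun x => sq_nonneg _)
    obtain ⟨z₀, hz₀K, hmax⟩ := usc_exists_max hKcomp
      ⟨0, mem_closedBall_self (le_of_lt hr0)⟩ huscF
    have hzK : z ∈ K := by
      rw [hKdef, mem_closedBall_zero_iff]
      exact le_of_lt hzr
    have hnormSq_le : ∀ w ∈ K, Complex.normSq w ≤ r ^ 2 := by
      intro w hw
      rw [hKdef, mem_closedBall_zero_iff] at hw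
      rw [← Complex.sq_norm]
      nlinarith [norm_nonneg w]
    -- The maximum value is at most 2r²/c
    have hFbound : F z₀ ≤ 2 * r ^ 2 / c := by
      by_cases hpos : 0 < F z₀
      · -- the max is positive, hence attained in the interior where lam > 0
        have hsq_nonneg : (0:ℝ) ≤ (r ^ 2 - Complex.normSq z₀) ^ 2 := sq_nonneg _
        have hpos' : 0 < lam z₀ * (r ^ 2 - Complex.normSq z₀) ^ 2 := hpos
        have hlam₀pos : 0 < lam z₀ := by
          by_contra h
          push_neg at h
          have := mul_nonpos_iff.mpr (Or.inr ⟨h, hsq_nonneg⟩)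
          linarith
        have hd₀ : Complex.normSq z₀ < r ^ 2 := by
          rcases eq_or_lt_of_le (hnormSq_le z₀ hz₀K) with h | h
          · exfalso; rw [← h] at hpos'; simp at hpos'
          · exact h
        have hz₀1 : z₀ ∈ Metric.ball (0 : ℂ) 1 := hKsub hz₀K
        have hC2 : ContDiffAt ℝ 2 lam z₀ := hsmooth z₀ hz₀1 hlam₀pos
        have hloglam : ContDiffAt ℝ 2 (fun w => Real.log (lam w)) z₀ :=
          hC2.log (ne_of_gt hlam₀pos)
        have hφ : ContDiffAt ℝ 2 (fun w => Real.log (r ^ 2 - Complex.normSq w)) z₀ :=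
          phi_contDiffAt r z₀ hd₀
        set u : ℂ → ℝ := fun w =>
          Real.log (lam w) + 2 * Real.log (r ^ 2 - Complex.normSq w) with hudef
        have hC2u : ContDiffAt ℝ 2 u z₀ := hloglam.add (contDiffAt_const.mul hφ)
        -- z₀ is a local max of u
        have habs₀ : ‖z₀‖ < r := by
          rw [← Complex.sq_norm] at hd₀
          nlinarith [norm_nonneg z₀]
        have hIsMax : IsLocalMax u z₀ := by
          have evlam : ∀ᶠ w in 𝓝 z₀, 0 < lam w :=
            hC2.continuousAt.eventually_const_lt hlam₀pos
          have evd : ∀ᶠ w in 𝓝 z₀, Complex.normSq w < r ^ 2 :=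
            Complex.continuous_normSq.continuousAt.eventually_lt_const hd₀
          have evK : ∀ᶠ w in 𝓝 z₀, w ∈ K := by
            have : Metric.ball (0:ℂ) r ∈ 𝓝 z₀ := Metric.isOpen_ball.mem_nhds
              (by rwa [mem_ball_zero_iff])
            exact Filter.eventually_of_mem this (fun w hw => ball_subset_closedBall hw)
          filter_upwards [evlam, evd, evK] with w hw1 hw2 hw3
          have hFw : F w ≤ F z₀ := hmax w hw3
          have hFwpos : 0 < F w := mul_pos hw1 (pow_pos (by linarith) 2)
          have hFz₀pos : 0 < F z₀ := hpos
          have hlogle : Real.log (F w) ≤ Real.log (F z₀) :=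
            Real.log_le_log hFwpos hFw
          have expand : ∀ ww : ℂ, 0 < lam ww → Complex.normSq ww < r ^ 2 →
              Real.log (F ww) = u ww := by
            intro ww h1 h2
            rw [hFdef, hudef]
            dsimp only
            rw [Real.log_mul (ne_of_gt h1) (ne_of_gt (pow_pos (by linarith) 2)), Real.log_pow]
            norm_num
          rw [expand w hw1 hw2, expand z₀ hlam₀pos hd₀] at hlogle
          exact hlogle
        -- the Laplacian inequality at z₀
        have hlapnonpos : lapZZbar u z₀ ≤ 0 :=
          lapZZbar_nonpos_of_isLocalMax u z₀ hC2u hIsMax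
        have hlapsplit : lapZZbar u z₀ = lapZZbar (fun w => Real.log (lam w)) z₀
            + 2 * lapZZbar (fun w => Real.log (r ^ 2 - Complex.normSq w)) z₀ := by
          rw [hudef]
          rw [lapZZbar_add _ _ z₀ hloglam (contDiffAt_const.mul hφ),
            lapZZbar_const_mul _ 2 z₀ hφ]
        have hlapphi := lapZZbar_phi r z₀ hd₀
        have hcurv₀ := hcurv z₀ hz₀1 hlam₀pos
        have hkey : c * lam z₀ ≤ 2 * r ^ 2 / (r ^ 2 - Complex.normSq z₀) ^ 2 := by
          have := hlapnonpos
          rw [hlapsplit, hlapphi] at this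
          have h2 : lapZZbar (fun w => Real.log (lam w)) z₀
              ≤ 2 * (r ^ 2 / (r ^ 2 - Complex.normSq z₀) ^ 2) := by
            have e : 2 * (-r ^ 2 / (r ^ 2 - Complex.normSq z₀) ^ 2)
                = -(2 * (r ^ 2 / (r ^ 2 - Complex.normSq z₀) ^ 2)) := by ring
            rw [e] at this
            linarith
          calc c * lam z₀ ≤ lapZZbar (fun w => Real.log (lam w)) z₀ := hcurv₀
            _ ≤ 2 * (r ^ 2 / (r ^ 2 - Complex.normSq z₀) ^ 2) := h2
            _ = 2 * r ^ 2 / (r ^ 2 - Complex.normSq z₀) ^ 2 := by ring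
        -- convert to the bound on F z₀
        have hd2 : (0:ℝ) < (r ^ 2 - Complex.normSq z₀) ^ 2 := pow_pos (by linarith) 2
        have hmul := mul_le_mul_of_nonneg_right hkey (le_of_lt hd2)
        rw [div_mul_cancel₀ _ (ne_of_gt hd2)] at hmul
        -- hmul : c * lam z₀ * (r^2 - normSq z₀)^2 ≤ 2 * r^2
        show lam z₀ * (r ^ 2 - Complex.normSq z₀) ^ 2 ≤ 2 * r ^ 2 / c
        rw [le_div_iff₀ hc]
        nlinarith [hmul]
      · push_neg at hpos
        have : (0:ℝ) < 2 * r ^ 2 / c := by positivity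
        linarith
    -- conclude for z
    have hFz : F z ≤ 2 * r ^ 2 / c := le_trans (hmax z hzK) hFbound
    have hdz : (0:ℝ) < (r ^ 2 - Complex.normSq z) ^ 2 := by
      have : Complex.normSq z < r ^ 2 := by
        rw [← Complex.sq_norm]; nlinarith [norm_nonneg z]
      exact pow_pos (by linarith) 2
    rw [le_div_iff₀ hdz]
    exact hFz
  -- take the limit r → 1⁻
  have hne1 : (1:ℝ) - Complex.normSq z ≠ 0 := by linarith
  have hlim : Tendsto (fun r : ℝ => (2 * r ^ 2 / c) / (r ^ 2 - Complex.normSq z) ^ 2)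
      (𝓝[<] 1) (𝓝 ((2 * 1 ^ 2 / c) / (1 ^ 2 - Complex.normSq z) ^ 2)) := by
    apply Tendsto.mono_left _ nhdsWithin_le_nhds
    apply ContinuousAt.tendsto
    apply ContinuousAt.div
    · fun_prop
    · fun_prop
    · simp only [one_pow]
      positivity
  have hevcl : ∀ᶠ r in 𝓝[<] (1:ℝ),
      lam z ≤ (2 * r ^ 2 / c) / (r ^ 2 - Complex.normSq z) ^ 2 := by
    filter_upwards [Ioo_mem_nhdsLT_of_mem (⟨hz1, le_rfl⟩ : (1:ℝ) ∈ Ioc (‖z‖) 1)]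
      with r hr
    exact claim r hr.1 hr.2
  have hfinal : lam z ≤ (2 * 1 ^ 2 / c) / (1 ^ 2 - Complex.normSq z) ^ 2 :=
    ge_of_tendsto hlim hevcl
  have heq : (2 / c) * (1 / (1 - ‖z‖ ^ 2)) ^ 2
      = (2 * 1 ^ 2 / c) / (1 ^ 2 - Complex.normSq z) ^ 2 := by
    rw [Complex.sq_norm]
    field_simp
  rw [heq]
  exact hfinal
end

section
/- Maximum principle step of the Schwarz-type lemma: Let u : Δ̄ → ℝ≥0 be continuous, vanishing on ∂Δ, u = (1−|z|²)²·v with v smooth and nonnegative on Δ, and suppose at every point z where v(z) > 0 one has i∂∂̄ log v ≥ ε·v (in the sense of (1,1)-forms identified with functions times idz∧dz̄/2). If u attains a positive maximum at z₀ ∈ Δ, then (ε/2)·v(z₀)·(1−|z₀|²)² ≤ 1, hence u(z) ≤ 2/ε for all z ∈ Δ. -/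
open Filter Metric Set Topology


lemma second_deriv_nonpos_of_localmax {g g' g'' : ℝ → ℝ}
    (hg' : ∀ᶠ t in 𝓝 (0:ℝ), HasDerivAt g (g' t) t)
    (hg'' : ∀ᶠ t in 𝓝 (0:ℝ), HasDerivAt g' (g'' t) t)
    (hcont : ContinuousAt g'' 0)
    (hmax : IsLocalMax g 0) : g'' 0 ≤ 0 := by
  by_contra hpos
  push_neg at hpos
  have hmax' : ∀ᶠ t in 𝓝 (0:ℝ), g t ≤ g 0 := hmax
  have hev : ∀ᶠ t in 𝓝 (0:ℝ),
      HasDerivAt g (g' t) t ∧ HasDerivAt g' (g'' t) t ∧ 0 < g'' t ∧ g t ≤ g 0 :=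
    hg'.and (hg''.and ((hcont.eventually (eventually_gt_nhds hpos)).and hmax'))
  rw [Metric.eventually_nhds_iff] at hev
  obtain ⟨δ, hδ, hball⟩ := hev
  set c := δ / 2 with hc
  have hcpos : 0 < c := by positivity
  have hmem : ∀ t ∈ Icc (0:ℝ) c, dist t (0:ℝ) < δ := by
    intro t ht
    rw [Real.dist_eq, sub_zero, abs_of_nonneg ht.1]
    calc t ≤ c := ht.2
    _ < δ := by rw [hc]; linarith
  have hg'0 : g' 0 = 0 := by
    have h0 := (hball (show dist (0:ℝ) 0 < δ by simpa using hδ)).1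
    rw [← h0.deriv]
    exact hmax.deriv_eq_zero
  have mono1 : StrictMonoOn g' (Icc 0 c) := by
    refine strictMonoOn_of_deriv_pos (convex_Icc 0 c) ?_ ?_
    · intro t ht
      exact ((hball (hmem t ht)).2.1).continuousAt.continuousWithinAt
    · intro t ht
      rw [interior_Icc] at ht
      have h := hball (hmem t ⟨le_of_lt ht.1, le_of_lt ht.2⟩)
      rw [h.2.1.deriv]
      exact h.2.2.1
  have hg'pos : ∀ t ∈ Ioo (0:ℝ) c, 0 < g' t := by
    intro t ht
    have := mono1 (left_mem_Icc.2 hcpos.le) ⟨ht.1.le, ht.2.le⟩ ht.1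
    rwa [hg'0] at this
  have mono2 : StrictMonoOn g (Icc 0 c) := by
    refine strictMonoOn_of_deriv_pos (convex_Icc 0 c) ?_ ?_
    · intro t ht
      exact ((hball (hmem t ht)).1).continuousAt.continuousWithinAt
    · intro t ht
      rw [interior_Icc] at ht
      have h := hball (hmem t ⟨le_of_lt ht.1, le_of_lt ht.2⟩)
      rw [h.1.deriv]
      exact hg'pos t ht
  have hlt : g 0 < g c := mono2 (left_mem_Icc.2 hcpos.le) (right_mem_Icc.2 hcpos.le) hcpos
  have hle : g c ≤ g 0 := (hball (hmem c (right_mem_Icc.2 hcpos.le))).2.2.2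
  linarith



lemma snd_dirderiv_nonpos_of_localmax {f : ℂ → ℝ} {z₀ : ℂ} (w : ℂ)
    (hf : ContDiffAt ℝ 2 f z₀) (hmax : IsLocalMax f z₀) :
    fderiv ℝ (fderiv ℝ f) z₀ w w ≤ 0 := by
  set L : ℝ → ℂ := fun t => z₀ + t • w with hL
  have hL0 : L 0 = z₀ := by simp [hL]
  have hLd : ∀ t : ℝ, HasDerivAt L w t := by
    intro t
    simpa [hL] using ((hasDerivAt_id t).smul_const w).const_add z₀
  have hLt : Tendsto L (𝓝 0) (𝓝 z₀) := hL0 ▸ (hLd 0).continuousAt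
  set G := fderiv ℝ f with hG
  have hfd : ∀ᶠ z in 𝓝 z₀, DifferentiableAt ℝ f z := by
    filter_upwards [hf.eventually (by norm_num)] with z hz
    exact hz.differentiableAt two_ne_zero
  have hGc : ContDiffAt ℝ 1 G z₀ := hf.fderiv_right (by norm_num)
  have hGd : ∀ᶠ z in 𝓝 z₀, DifferentiableAt ℝ G z := by
    filter_upwards [hGc.eventually (by norm_num)] with z hz
    exact hz.differentiableAt one_ne_zero
  set g : ℝ → ℝ := fun t => f (L t) with hg
  set g' : ℝ → ℝ := fun t => G (L t) w with hg'
  set g'' : ℝ → ℝ := fun t => fderiv ℝ G (L t) w w with hg''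
  have h1 : ∀ᶠ t in 𝓝 (0:ℝ), HasDerivAt g (g' t) t := by
    filter_upwards [hLt.eventually hfd] with t ht
    exact ht.hasFDerivAt.comp_hasDerivAt t (hLd t)
  have h2 : ∀ᶠ t in 𝓝 (0:ℝ), HasDerivAt g' (g'' t) t := by
    filter_upwards [hLt.eventually hGd] with t ht
    have step : HasDerivAt (fun t => G (L t)) (fderiv ℝ G (L t) w) t :=
      ht.hasFDerivAt.comp_hasDerivAt t (hLd t)
    have := (ContinuousLinearMap.apply ℝ ℝ w).hasFDerivAt.comp_hasDerivAt t step
    exact this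
  have h3 : ContinuousAt g'' 0 := by
    have hc1 : ContinuousAt (fderiv ℝ G) z₀ :=
      (hGc.fderiv_right (m := 0) (by norm_num)).continuousAt
    have hc2 : ContinuousAt (fun t : ℝ => fderiv ℝ G (L t)) 0 := by
      rw [← hL0] at hc1
      exact hc1.comp (hLd 0).continuousAt
    have hc3 : ContinuousAt (fun t : ℝ => fderiv ℝ G (L t) w) 0 :=
      ((ContinuousLinearMap.apply ℝ (ℂ →L[ℝ] ℝ) w).continuous.continuousAt).comp hc2
    exact ((ContinuousLinearMap.apply ℝ ℝ w).continuous.continuousAt).comp hc3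
  have h4 : IsLocalMax g 0 := by
    have : ∀ᶠ t in 𝓝 (0:ℝ), f (L t) ≤ f z₀ := hLt.eventually hmax
    simpa [IsLocalMax, IsMaxFilter, hg, hL0] using this
  have := second_deriv_nonpos_of_localmax h1 h2 h3 h4
  simpa [hg'', hL0] using this

noncomputable def phir (z : ℂ) : ℝ := 2 * Real.log (1 - z.re ^ 2 - z.im ^ 2)

noncomputable def qCLM (z : ℂ) : ℂ →L[ℝ] ℝ :=
  (-(2 * z.re)) • Complex.reCLM + (-(2 * z.im)) • Complex.imCLM

lemma hasFDerivAt_re (z : ℂ) : HasFDerivAt (fun z : ℂ => z.re) Complex.reCLM z :=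
  Complex.reCLM.hasFDerivAt

lemma hasFDerivAt_im (z : ℂ) : HasFDerivAt (fun z : ℂ => z.im) Complex.imCLM z :=
  Complex.imCLM.hasFDerivAt

lemma hasFDerivAt_q (z : ℂ) :
    HasFDerivAt (fun y : ℂ => 1 - y.re ^ 2 - y.im ^ 2) (qCLM z) z := by
  have h := ((hasFDerivAt_const (1:ℝ) z).sub
      ((hasFDerivAt_re z).mul (hasFDerivAt_re z))).sub
    ((hasFDerivAt_im z).mul (hasFDerivAt_im z))
  have hfun : (fun y : ℂ => 1 - y.re ^ 2 - y.im ^ 2)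
      = fun y : ℂ => 1 - y.re * y.re - y.im * y.im := by
    funext y; ring
  rw [hfun]
  refine h.congr_fderiv ?_
  ext v
  simp [qCLM]
  ring

lemma contDiffAt_phir {z : ℂ} (hz : z.re ^ 2 + z.im ^ 2 < 1) :
    ContDiffAt ℝ 2 phir z := by
  have hq : ContDiffAt ℝ 2 (fun y : ℂ => 1 - y.re ^ 2 - y.im ^ 2) z := by
    apply ContDiffAt.sub
    apply ContDiffAt.sub
    · exact contDiffAt_const
    · exact (Complex.reCLM.contDiff.pow 2).contDiffAt
    · exact (Complex.imCLM.contDiff.pow 2).contDiffAt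
  have hne : (1 : ℝ) - z.re ^ 2 - z.im ^ 2 ≠ 0 := by nlinarith
  exact contDiffAt_const.mul (hq.log hne)

lemma hasFDerivAt_phir {z : ℂ} (hz : z.re ^ 2 + z.im ^ 2 < 1) :
    HasFDerivAt phir ((2 * (1 - z.re ^ 2 - z.im ^ 2)⁻¹) • qCLM z) z := by
  have hne : (1 : ℝ) - z.re ^ 2 - z.im ^ 2 ≠ 0 := by nlinarith
  have h := ((hasFDerivAt_q z).log hne).const_mul (2 : ℝ)
  refine h.congr_fderiv ?_
  rw [smul_smul]

lemma fderiv_phir_apply {z : ℂ} (hz : z.re ^ 2 + z.im ^ 2 < 1) (w : ℂ) :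
    fderiv ℝ phir z w =
      2 * (1 - z.re ^ 2 - z.im ^ 2)⁻¹ * (-(2 * z.re) * w.re + -(2 * z.im) * w.im) := by
  rw [(hasFDerivAt_phir hz).fderiv]
  simp [qCLM]
  ring

lemma snd_fderiv_phir {z : ℂ} (hz : z.re ^ 2 + z.im ^ 2 < 1) (w : ℂ) :
    fderiv ℝ (fderiv ℝ phir) z w w =
      -8 * (z.re * w.re + z.im * w.im) ^ 2 / (1 - z.re ^ 2 - z.im ^ 2) ^ 2
        - 4 * (w.re ^ 2 + w.im ^ 2) / (1 - z.re ^ 2 - z.im ^ 2) := by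
  have hs : (0:ℝ) < 1 - z.re ^ 2 - z.im ^ 2 := by nlinarith
  have hne : (1:ℝ) - z.re ^ 2 - z.im ^ 2 ≠ 0 := ne_of_gt hs
  have hU : ∀ᶠ y in 𝓝 z, y.re ^ 2 + y.im ^ 2 < 1 := by
    have : IsOpen {y : ℂ | y.re ^ 2 + y.im ^ 2 < 1} :=
      isOpen_lt ((Complex.continuous_re.pow 2).add (Complex.continuous_im.pow 2))
        continuous_const
    exact this.mem_nhds hz
  set ew : ℂ → ℝ := fun y =>
    (-(4 * w.re) * y.re + -(4 * w.im) * y.im) * (1 - y.re ^ 2 - y.im ^ 2)⁻¹ with hew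
  have heq : (fun y => fderiv ℝ phir y w) =ᶠ[𝓝 z] ew := by
    filter_upwards [hU] with y hy
    rw [fderiv_phir_apply hy w, hew]
    ring
  have hd2 : DifferentiableAt ℝ (fderiv ℝ phir) z :=
    ((contDiffAt_phir hz).fderiv_right (m := 1) (by norm_num)).differentiableAt one_ne_zero
  have hid : fderiv ℝ (fun y => fderiv ℝ phir y w) z
      = (fderiv ℝ (fderiv ℝ phir) z).flip w := by
    rw [fderiv_clm_apply hd2 (differentiableAt_const w)]
    simp
  have hnum : HasFDerivAt (fun y : ℂ => -(4 * w.re) * y.re + -(4 * w.im) * y.im)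
      ((-(4 * w.re)) • Complex.reCLM + (-(4 * w.im)) • Complex.imCLM) z :=
    ((hasFDerivAt_re z).const_mul _).add ((hasFDerivAt_im z).const_mul _)
  have hinv : HasFDerivAt (fun y : ℂ => (1 - y.re ^ 2 - y.im ^ 2)⁻¹)
      ((-((1 - z.re ^ 2 - z.im ^ 2) ^ 2)⁻¹) • qCLM z) z :=
    (hasDerivAt_inv hne).comp_hasFDerivAt z (hasFDerivAt_q z)
  have hE : HasFDerivAt ew
      ((-(4 * w.re) * z.re + -(4 * w.im) * z.im) •
          ((-((1 - z.re ^ 2 - z.im ^ 2) ^ 2)⁻¹) • qCLM z)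
        + (1 - z.re ^ 2 - z.im ^ 2)⁻¹ •
          ((-(4 * w.re)) • Complex.reCLM + (-(4 * w.im)) • Complex.imCLM)) z :=
    hnum.mul hinv
  have key : fderiv ℝ (fderiv ℝ phir) z w w = fderiv ℝ ew z w := by
    rw [← heq.fderiv_eq, hid]
    simp
  rw [key, hE.fderiv]
  simp [qCLM]
  field_simp
  ring


lemma lapZZbar_eq (f : ℂ → ℝ) (z : ℂ) :
    lapZZbar f z = (1 / 4) * (fderiv ℝ (fderiv ℝ f) z 1 1
      + fderiv ℝ (fderiv ℝ f) z Complex.I Complex.I) := by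
  unfold lapZZbar
  rw [iteratedFDeriv_two_apply, iteratedFDeriv_two_apply]
  simp

lemma lapZZbar_phir {z : ℂ} (hz : z.re ^ 2 + z.im ^ 2 < 1) :
    lapZZbar phir z = -2 / (1 - z.re ^ 2 - z.im ^ 2) ^ 2 := by
  have hs : (0:ℝ) < 1 - z.re ^ 2 - z.im ^ 2 := by nlinarith
  rw [lapZZbar_eq, snd_fderiv_phir hz 1, snd_fderiv_phir hz Complex.I]
  simp [Complex.one_re, Complex.one_im, Complex.I_re, Complex.I_im]
  field_simp
  ring

lemma lapZZbar_add_s14 {a b : ℂ → ℝ} {z : ℂ} (ha : ContDiffAt ℝ 2 a z)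
    (hb : ContDiffAt ℝ 2 b z) :
    lapZZbar (fun y => a y + b y) z = lapZZbar a z + lapZZbar b z := by
  have hda : ∀ᶠ y in 𝓝 z, DifferentiableAt ℝ a y := by
    filter_upwards [ha.eventually (by norm_num)] with y hy
    exact hy.differentiableAt two_ne_zero
  have hdb : ∀ᶠ y in 𝓝 z, DifferentiableAt ℝ b y := by
    filter_upwards [hb.eventually (by norm_num)] with y hy
    exact hy.differentiableAt two_ne_zero
  have hev : fderiv ℝ (fun y => a y + b y) =ᶠ[𝓝 z]
      fun y => fderiv ℝ a y + fderiv ℝ b y := by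
    filter_upwards [hda, hdb] with y h1 h2
    exact fderiv_add h1 h2
  have hda2 : DifferentiableAt ℝ (fderiv ℝ a) z :=
    (ha.fderiv_right (m := 1) (by norm_num)).differentiableAt one_ne_zero
  have hdb2 : DifferentiableAt ℝ (fderiv ℝ b) z :=
    (hb.fderiv_right (m := 1) (by norm_num)).differentiableAt one_ne_zero
  have h2 : fderiv ℝ (fderiv ℝ (fun y => a y + b y)) z
      = fderiv ℝ (fderiv ℝ a) z + fderiv ℝ (fderiv ℝ b) z := by
    rw [hev.fderiv_eq]; exact (hda2.hasFDerivAt.add hdb2.hasFDerivAt).fderiv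
  rw [lapZZbar_eq, lapZZbar_eq, lapZZbar_eq, h2]
  simp
  ring

/-- **maximum principle step.** Let `u : Δ̄ → ℝ≥0` be continuous, vanishing
on `∂Δ`, with `u = (1−|z|²)²·v`, `v` smooth and nonnegative on `Δ`, and suppose
`i∂∂̄ log v ≥ ε·v` wherever `v > 0`. If `u` attains a positive maximum at `z₀ ∈ Δ`, then
`(ε/2)·v(z₀)·(1−|z₀|²)² ≤ 1`, hence `u ≤ 2/ε` on `Δ`. -/
theorem maximum_principle_step
    (u v : ℂ → ℝ) (ε : ℝ) (hε : 0 < ε)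
    (hu_cont : ContinuousOn u (Metric.closedBall (0 : ℂ) 1))
    (hu_nonneg : ∀ z ∈ Metric.closedBall (0 : ℂ) 1, 0 ≤ u z)
    (hu_bdry : ∀ z : ℂ, ‖z‖ = 1 → u z = 0)
    (hv_smooth : ContDiffOn ℝ 2 v (Metric.ball (0 : ℂ) 1))
    (hv_nonneg : ∀ z ∈ Metric.ball (0 : ℂ) 1, 0 ≤ v z)
    (huv : ∀ z ∈ Metric.closedBall (0 : ℂ) 1,
      u z = (1 - ‖z‖ ^ 2) ^ 2 * v z)
    (hcurv : ∀ z ∈ Metric.ball (0 : ℂ) 1, 0 < v z →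
      ε * v z ≤ lapZZbar (fun w => Real.log (v w)) z)
    (z₀ : ℂ) (hz₀ : z₀ ∈ Metric.ball (0 : ℂ) 1)
    (hmax_pos : 0 < u z₀)
    (hmax : ∀ z ∈ Metric.closedBall (0 : ℂ) 1, u z ≤ u z₀) :
    (ε / 2) * v z₀ * (1 - ‖z₀‖ ^ 2) ^ 2 ≤ 1 ∧
    ∀ z ∈ Metric.ball (0 : ℂ) 1, u z ≤ 2 / ε := by
  have habs : ∀ z : ℂ, ‖z‖ ^ 2 = z.re ^ 2 + z.im ^ 2 := fun z => by
    rw [Complex.sq_norm, Complex.normSq_apply]; ring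
  have hball_abs : ∀ z : ℂ, z ∈ Metric.ball (0 : ℂ) 1 → z.re ^ 2 + z.im ^ 2 < 1 := by
    intro z hz
    rw [← habs]
    have h1 : ‖z‖ < 1 := by
      simpa [Complex.dist_eq] using (Metric.mem_ball.1 hz)
    exact pow_lt_one₀ (norm_nonneg z) h1 two_ne_zero
  have hq₀ : z₀.re ^ 2 + z₀.im ^ 2 < 1 := hball_abs z₀ hz₀
  have hs₀ : (0:ℝ) < 1 - ‖z₀‖ ^ 2 := by rw [habs]; linarith
  have hvz₀ : 0 < v z₀ := by
    have h := huv z₀ (Metric.ball_subset_closedBall hz₀)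
    nlinarith [hv_nonneg z₀ hz₀]
  -- positivity of v and u on the set W
  set a : ℂ → ℝ := fun w => Real.log (v w) with ha_def
  have ha2 : ContDiffAt ℝ 2 a z₀ :=
    (hv_smooth.contDiffAt (Metric.isOpen_ball.mem_nhds hz₀)).log (ne_of_gt hvz₀)
  have hφ2 : ContDiffAt ℝ 2 phir z₀ := contDiffAt_phir hq₀
  set F : ℂ → ℝ := fun z => a z + phir z with hF_def
  have hF2 : ContDiffAt ℝ 2 F z₀ := ha2.add hφ2
  -- the open set where v > 0
  have hWo : IsOpen (Metric.ball (0 : ℂ) 1 ∩ v ⁻¹' Set.Ioi 0) :=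
    hv_smooth.continuousOn.isOpen_inter_preimage Metric.isOpen_ball isOpen_Ioi
  have hWn : Metric.ball (0 : ℂ) 1 ∩ v ⁻¹' Set.Ioi 0 ∈ 𝓝 z₀ :=
    hWo.mem_nhds ⟨hz₀, hvz₀⟩
  have hFlog : ∀ z ∈ Metric.ball (0 : ℂ) 1 ∩ v ⁻¹' Set.Ioi 0,
      F z = Real.log (u z) := by
    rintro z ⟨hzb, hvz⟩
    have hvz : (0:ℝ) < v z := hvz
    have hqz : (0:ℝ) < 1 - ‖z‖ ^ 2 := by
      have := hball_abs z hzb; rw [habs]; linarith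
    rw [huv z (Metric.ball_subset_closedBall hzb),
      Real.log_mul (by positivity) (ne_of_gt hvz), Real.log_pow]
    have : phir z = 2 * Real.log (1 - ‖z‖ ^ 2) := by
      unfold phir
      rw [habs, sub_sub]
    rw [hF_def]
    simp only [this]
    push_cast
    ring
  have hFmax : IsLocalMax F z₀ := by
    have hz₀W : z₀ ∈ Metric.ball (0 : ℂ) 1 ∩ v ⁻¹' Set.Ioi 0 := ⟨hz₀, hvz₀⟩
    filter_upwards [hWn] with z hz
    rw [hFlog z hz, hFlog z₀ hz₀W]
    have huz : 0 < u z := by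
      rcases hz with ⟨hzb, hvz⟩
      have hqz : (0:ℝ) < 1 - ‖z‖ ^ 2 := by
        have := hball_abs z hzb; rw [habs]; linarith
      rw [huv z (Metric.ball_subset_closedBall hzb)]
      have : (0:ℝ) < v z := hvz
      positivity
    exact Real.log_le_log huz (hmax z (Metric.ball_subset_closedBall hz.1))
  -- maximum principle
  have hlapF : lapZZbar F z₀ ≤ 0 := by
    rw [lapZZbar_eq]
    have h1 := snd_dirderiv_nonpos_of_localmax 1 hF2 hFmax
    have h2 := snd_dirderiv_nonpos_of_localmax Complex.I hF2 hFmax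
    linarith
  have hadd : lapZZbar F z₀ = lapZZbar a z₀ + lapZZbar phir z₀ := lapZZbar_add_s14 ha2 hφ2
  have hφval : lapZZbar phir z₀ = -2 / (1 - z₀.re ^ 2 - z₀.im ^ 2) ^ 2 :=
    lapZZbar_phir hq₀
  have hc := hcurv z₀ hz₀ hvz₀
  have hkey : ε * v z₀ ≤ 2 / (1 - ‖z₀‖ ^ 2) ^ 2 := by
    have hrw : (1:ℝ) - ‖z₀‖ ^ 2 = 1 - z₀.re ^ 2 - z₀.im ^ 2 := by
      rw [habs]; ring
    rw [hrw]
    have : lapZZbar a z₀ ≤ 2 / (1 - z₀.re ^ 2 - z₀.im ^ 2) ^ 2 := by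
      have hs : (0:ℝ) < 1 - z₀.re ^ 2 - z₀.im ^ 2 := by linarith [hq₀]
      have h := hadd
      rw [hφval] at h
      have : lapZZbar a z₀ = lapZZbar F z₀ + 2 / (1 - z₀.re ^ 2 - z₀.im ^ 2) ^ 2 := by
        rw [h]; ring
      rw [this]
      linarith
    exact le_trans hc this
  have hs2 : (0:ℝ) < (1 - ‖z₀‖ ^ 2) ^ 2 := by positivity
  have hpart1 : (ε / 2) * v z₀ * (1 - ‖z₀‖ ^ 2) ^ 2 ≤ 1 := by
    have h := (le_div_iff₀ hs2).1 hkey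
    nlinarith
  refine ⟨hpart1, fun z hz => ?_⟩
  have huz₀ : u z₀ = (1 - ‖z₀‖ ^ 2) ^ 2 * v z₀ :=
    huv z₀ (Metric.ball_subset_closedBall hz₀)
  have h1 : u z ≤ u z₀ := hmax z (Metric.ball_subset_closedBall hz)
  have h2 : u z₀ ≤ 2 / ε := by
    rw [le_div_iff₀ hε, huz₀]
    nlinarith
  linarith
end
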